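/- Let n ≥ 8 be an integer. If the complete graph K_n admits a connected and complete k-edge-coloring, then k ≤ (n-1)·(√(n/2 + 1/16) + 1/4). -/

import Mathlib

open SimpleGraph

/-- The subgraph of `G` formed by the edges of color `i`. -/
def colorClassSubgraph {V : Type*} {k : ℕ} (G : SimpleGraph V) (c : Sym2 V → Fin k)
    (i : Fin k) : G.Subgraph where
  verts := {v | ∃ w, G.Adj v w ∧ c s(v, w) = i}
  Adj v w := G.Adj v w ∧ c s(v, w) = i
  adj_sub h := h.1
  edge_vert h := ⟨_, h⟩
  symm := ⟨fun v w h => ⟨h.1.symm, by rw [Sym2.eq_swap]; exact h.2⟩⟩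

/-- `c` is a complete edge-coloring of `G` with `k` colors: every color is used on some
edge, and every two distinct colors appear on a pair of edges sharing a vertex. -/
def IsCompleteEdgeColoring {V : Type*} {k : ℕ} (G : SimpleGraph V)
    (c : Sym2 V → Fin k) : Prop :=
  (∀ i : Fin k, ∃ e ∈ G.edgeSet, c e = i) ∧
  ∀ i j : Fin k, i ≠ j →
    ∃ u v w : V, G.Adj u v ∧ G.Adj u w ∧ c s(u, v) = i ∧ c s(u, w) = j

/-- `c` is a connected edge-coloring: each color class induces a connected subgraph. -/
def IsConnectedEdgeColoring {V : Type*} {k : ℕ} (G : SimpleGraph V)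
    (c : Sym2 V → Fin k) : Prop :=
  ∀ i : Fin k, (colorClassSubgraph G c i).Connected

namespace CPAux

open Finset

/-- A connected graph on a finite vertex type has at least `card W - 1` edges. -/
lemma conn_card_verts_le {W : Type*} [Fintype W] (H : SimpleGraph W) [Fintype H.edgeSet]
    (hc : H.Connected) : Fintype.card W ≤ H.edgeFinset.card + 1 := by
  classical
  obtain ⟨r⟩ := hc.nonempty
  have key : ∀ v : W, v ≠ r → ∃ x, H.Adj v x ∧ H.dist x r < H.dist v r := by
    intro v hv
    obtain ⟨p, hp⟩ := (hc.preconnected v r).exists_walk_length_eq_dist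
    cases p with
    | nil => exact absurd rfl hv
    | @cons _ x _ h q =>
      refine ⟨x, h, lt_of_le_of_lt (dist_le q) ?_⟩
      have : q.length + 1 = H.dist v r := by simpa [Walk.length_cons] using hp
      omega
  choose g hadj hdist using key
  let f : W → Sym2 W := fun v => if h : v = r then s(v, v) else s(v, g v h)
  have hf : ∀ (v : W) (h : v ≠ r), f v = s(v, g v h) := fun v h => dif_neg h
  have hcard : (Finset.univ.erase r).card ≤ H.edgeFinset.card := by
    apply Finset.card_le_card_of_injOn f
    · intro v hv
      have hvr : v ≠ r := (Finset.mem_erase.mp hv).1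
      rw [hf v hvr, Finset.mem_coe, mem_edgeFinset, mem_edgeSet]
      exact hadj v hvr
    · intro a ha b hb hfab
      have har : a ≠ r := (Finset.mem_erase.mp ha).1
      have hbr : b ≠ r := (Finset.mem_erase.mp hb).1
      rw [hf a har, hf b hbr, Sym2.eq_iff] at hfab
      rcases hfab with ⟨h1, _⟩ | ⟨h1, h2⟩
      · exact h1
      · exfalso
        have d1 := hdist a har
        have d2 := hdist b hbr
        rw [h2] at d1
        rw [← h1] at d2
        omega
  have : (Finset.univ.erase r).card = Fintype.card W - 1 := by
    rw [Finset.card_erase_of_mem (Finset.mem_univ r), Finset.card_univ]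
  omega

/-- A connected graph on ≥ 3 vertices has a vertex with two distinct neighbors. -/
lemma conn_exists_two_nbrs {W : Type*} [Fintype W] (H : SimpleGraph W)
    (hc : H.Connected) (h3 : 3 ≤ Fintype.card W) :
    ∃ v a b : W, a ≠ b ∧ H.Adj v a ∧ H.Adj v b := by
  classical
  by_contra hcon
  push_neg at hcon
  have huniq : ∀ v a b, H.Adj v a → H.Adj v b → a = b := by
    intro v a b ha hb
    by_contra hne
    exact hcon v a b hne ha hb
  have hwalk : ∀ {a b : W} (_ : H.Walk a b), b = a ∨ H.Adj a b := by
    intro a b p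
    induction p with
    | nil => exact Or.inl rfl
    | @cons u x _ h q ih =>
      rcases ih with rfl | hxb
      · exact Or.inr h
      · exact Or.inl (huniq x _ _ hxb h.symm)
  have r : W := Classical.choice hc.nonempty
  have hsub : (Finset.univ : Finset W) ⊆ insert r (Finset.univ.filter (H.Adj r)) := by
    intro b _
    obtain ⟨p⟩ := hc.preconnected r b
    rcases hwalk p with rfl | hadj
    · exact Finset.mem_insert_self _ _
    · exact Finset.mem_insert_of_mem (Finset.mem_filter.mpr ⟨Finset.mem_univ _, hadj⟩)
  have h1 : (Finset.univ.filter (H.Adj r)).card ≤ 1 := by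
    apply Finset.card_le_one.mpr
    intro a ha b hb
    exact huniq r a b (Finset.mem_filter.mp ha).2 (Finset.mem_filter.mp hb).2
  have h2 := Finset.card_le_card hsub
  have h3' := Finset.card_insert_le r (Finset.univ.filter (H.Adj r))
  rw [Finset.card_univ] at h2
  omega

/-- off-diagonal count of a square product -/
lemma offdiag_card {α : Type*} [DecidableEq α] (s : Finset α) :
    ((s ×ˢ s).filter (fun p => p.1 ≠ p.2)).card + s.card = s.card * s.card := by
  classical
  have h1 := Finset.card_filter_add_card_filter_not
    (s := s ×ˢ s) (p := fun p : α × α => p.1 ≠ p.2)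
  have h2 : (s ×ˢ s).filter (fun p : α × α => ¬ p.1 ≠ p.2)
      = (s ×ˢ s).filter (fun p : α × α => p.1 = p.2) := by
    apply Finset.filter_congr
    intro p _
    simp
  have h3 : (s ×ˢ s).filter (fun p : α × α => p.1 = p.2) = s.image (fun a => (a, a)) := by
    ext ⟨a, b⟩
    simp only [Finset.mem_filter, Finset.mem_product, Finset.mem_image]
    constructor
    · rintro ⟨⟨ha, _⟩, rfl⟩
      exact ⟨a, ha, rfl⟩
    · rintro ⟨x, hx, h⟩
      rw [Prod.mk.injEq] at h
      obtain ⟨rfl, rfl⟩ := h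
      exact ⟨⟨hx, hx⟩, rfl⟩
  have h4 : (s.image (fun a => (a, a))).card = s.card :=
    Finset.card_image_of_injective s (fun a b hab => (Prod.ext_iff.mp hab).1)
  rw [h2, h3, h4, Finset.card_product] at h1
  exact h1


variable {n k : ℕ}

/-- The neighbors of `v` joined to `v` by an edge of color `i`. -/
def mS (c : Sym2 (Fin n) → Fin k) (v : Fin n) (i : Fin k) : Finset (Fin n) :=
  (Finset.univ.erase v).filter (fun w => c s(v, w) = i)

/-- The colors present at `v`. -/
def dS (c : Sym2 (Fin n) → Fin k) (v : Fin n) : Finset (Fin k) :=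
  Finset.univ.filter (fun i => 0 < (mS c v i).card)

/-- The vertices of color class `i`. -/
def vS (c : Sym2 (Fin n) → Fin k) (i : Fin k) : Finset (Fin n) :=
  Finset.univ.filter (fun v => 0 < (mS c v i).card)

/-- The edges of color class `i`. -/
noncomputable def eS (c : Sym2 (Fin n) → Fin k) (i : Fin k) : Finset (Sym2 (Fin n)) :=
  (⊤ : SimpleGraph (Fin n)).edgeFinset.filter (fun e => c e = i)

/-- Ordered pairs of distinct colors present at `v`. -/
def oS (c : Sym2 (Fin n) → Fin k) (v : Fin n) : Finset (Fin k × Fin k) :=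
  ((dS c v) ×ˢ (dS c v)).filter (fun p => p.1 ≠ p.2)

/-- The colors with exactly one edge at `v`. -/
def yS (c : Sym2 (Fin n) → Fin k) (v : Fin n) : Finset (Fin k) :=
  Finset.univ.filter (fun i => (mS c v i).card = 1)

/-- The vertices at which color class `i` has exactly one edge. -/
def rS (c : Sym2 (Fin n) → Fin k) (i : Fin k) : Finset (Fin n) :=
  Finset.univ.filter (fun v => (mS c v i).card = 1)

lemma mem_mS {c : Sym2 (Fin n) → Fin k} {v w : Fin n} {i : Fin k} :
    w ∈ mS c v i ↔ (w ≠ v ∧ c s(v, w) = i) := by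
  simp [mS]

lemma mS_pos_iff {c : Sym2 (Fin n) → Fin k} {v : Fin n} {i : Fin k} :
    0 < (mS c v i).card ↔ ∃ w, v ≠ w ∧ c s(v, w) = i := by
  rw [Finset.card_pos]
  constructor
  · rintro ⟨w, hw⟩
    obtain ⟨h1, h2⟩ := mem_mS.mp hw
    exact ⟨w, h1.symm, h2⟩
  · rintro ⟨w, h1, h2⟩
    exact ⟨w, mem_mS.mpr ⟨h1.symm, h2⟩⟩

lemma mem_verts_iff {c : Sym2 (Fin n) → Fin k} {v : Fin n} {i : Fin k} :
    v ∈ (colorClassSubgraph (⊤ : SimpleGraph (Fin n)) c i).verts ↔ 0 < (mS c v i).card := by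
  rw [mS_pos_iff]
  simp [colorClassSubgraph]

lemma class_adj_iff {c : Sym2 (Fin n) → Fin k} {v w : Fin n} {i : Fin k} :
    (colorClassSubgraph (⊤ : SimpleGraph (Fin n)) c i).Adj v w ↔ (v ≠ w ∧ c s(v, w) = i) := by
  simp [colorClassSubgraph]

lemma sum_mS_card (c : Sym2 (Fin n) → Fin k) (v : Fin n) :
    ∑ i, (mS c v i).card = n - 1 := by
  classical
  have h := Finset.card_eq_sum_card_fiberwise
    (s := Finset.univ.erase v) (t := Finset.univ) (f := fun w => c s(v, w))
    (fun w _ => Finset.mem_univ _)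
  rw [Finset.card_erase_of_mem (Finset.mem_univ v), Finset.card_univ, Fintype.card_fin] at h
  rw [h]
  exact Finset.sum_congr rfl (fun i _ => rfl)

lemma dS_card_le (c : Sym2 (Fin n) → Fin k) (v : Fin n) :
    (dS c v).card ≤ n - 1 := by
  classical
  calc (dS c v).card = ∑ _i ∈ dS c v, 1 := by rw [Finset.card_eq_sum_ones]
    _ ≤ ∑ i ∈ dS c v, (mS c v i).card :=
        Finset.sum_le_sum (fun i hi => (Finset.mem_filter.mp hi).2)
    _ ≤ ∑ i, (mS c v i).card :=
        Finset.sum_le_sum_of_subset (Finset.filter_subset _ _)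
    _ = n - 1 := sum_mS_card c v

lemma two_dS_card_le (c : Sym2 (Fin n) → Fin k) (v : Fin n) :
    2 * (dS c v).card ≤ (n - 1) + (yS c v).card := by
  classical
  have step : ∀ i ∈ dS c v,
      2 ≤ (mS c v i).card + (if (mS c v i).card = 1 then 1 else 0) := by
    intro i hi
    have h1 : 0 < (mS c v i).card := (Finset.mem_filter.mp hi).2
    by_cases h : (mS c v i).card = 1
    · simp [h]
    · simp only [h, if_false]
      omega
  calc 2 * (dS c v).card = ∑ _i ∈ dS c v, 2 := by
        rw [Finset.sum_const, smul_eq_mul, mul_comm]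
    _ ≤ ∑ i ∈ dS c v, ((mS c v i).card + (if (mS c v i).card = 1 then 1 else 0)) :=
        Finset.sum_le_sum step
    _ = ∑ i ∈ dS c v, (mS c v i).card
        + ∑ i ∈ dS c v, (if (mS c v i).card = 1 then 1 else 0) :=
        Finset.sum_add_distrib
    _ ≤ (n - 1) + (yS c v).card := by
        apply Nat.add_le_add
        · calc ∑ i ∈ dS c v, (mS c v i).card ≤ ∑ i, (mS c v i).card :=
              Finset.sum_le_sum_of_subset (Finset.filter_subset _ _)
            _ = n - 1 := sum_mS_card c v
        · rw [← Finset.card_filter]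
          apply Finset.card_le_card
          intro i hi
          exact Finset.mem_filter.mpr ⟨Finset.mem_univ _, (Finset.mem_filter.mp hi).2⟩

lemma oS_card (c : Sym2 (Fin n) → Fin k) (v : Fin n) :
    (oS c v).card + (dS c v).card = (dS c v).card * (dS c v).card :=
  offdiag_card (dS c v)

lemma sum_d_eq_sum_t (c : Sym2 (Fin n) → Fin k) :
    ∑ v, (dS c v).card = ∑ i, (vS c i).card := by
  classical
  simp only [dS, vS, Finset.card_filter]
  exact Finset.sum_comm

lemma sum_y_eq_sum_r (c : Sym2 (Fin n) → Fin k) :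
    ∑ v, (yS c v).card = ∑ i, (rS c i).card := by
  classical
  simp only [yS, rS, Finset.card_filter]
  exact Finset.sum_comm

lemma sum_e_card (c : Sym2 (Fin n) → Fin k) :
    2 * ∑ i, (eS c i).card = n * (n - 1) := by
  classical
  have h := Finset.card_eq_sum_card_fiberwise
    (s := (⊤ : SimpleGraph (Fin n)).edgeFinset) (t := Finset.univ) (f := c)
    (fun e _ => Finset.mem_univ _)
  have h2 : (⊤ : SimpleGraph (Fin n)).edgeFinset.card = n.choose 2 := by
    rw [SimpleGraph.card_edgeFinset_top_eq_card_choose_two, Fintype.card_fin]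
  have h3 : 2 * n.choose 2 = n * (n - 1) := by
    rw [Nat.choose_two_right]
    have hdvd : 2 ∣ n * (n - 1) := by
      rcases n with _ | m
      · simp
      · have h' : Even ((m + 1) * m) := by
          have := Nat.even_mul_succ_self m
          rwa [mul_comm] at this
        simpa using h'.two_dvd
    omega
  have h4 : ∑ i, (eS c i).card = (⊤ : SimpleGraph (Fin n)).edgeFinset.card := by
    rw [h]
    exact Finset.sum_congr rfl (fun i _ => rfl)
  rw [h4, h2]
  exact h3


lemma card_verts_eq (c : Sym2 (Fin n) → Fin k) (i : Fin k)
    [Fintype ↥((colorClassSubgraph (⊤ : SimpleGraph (Fin n)) c i).verts)] :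
    Fintype.card ↥((colorClassSubgraph (⊤ : SimpleGraph (Fin n)) c i).verts)
      = (vS c i).card := by
  classical
  rw [← Fintype.card_coe (vS c i)]
  apply Fintype.card_congr
  apply Equiv.subtypeEquivRight
  intro v
  rw [mem_verts_iff]
  simp [vS]

/-- Tree bound: each color class has at least `t_i - 1` edges. -/
lemma t_le_e (c : Sym2 (Fin n) → Fin k)
    (hconn : IsConnectedEdgeColoring (⊤ : SimpleGraph (Fin n)) c) (i : Fin k) :
    (vS c i).card ≤ (eS c i).card + 1 := by
  classical
  set H := (colorClassSubgraph (⊤ : SimpleGraph (Fin n)) c i) with hH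
  letI : Fintype ↥H.verts := Fintype.ofFinite _
  letI : Fintype ↥H.coe.edgeSet := Fintype.ofFinite _
  have hcoe : H.coe.Connected := ((Subgraph.connected_iff').mp (hconn i))
  have h1 := conn_card_verts_le H.coe hcoe
  have h2 : Fintype.card ↥H.verts = (vS c i).card := card_verts_eq c i
  have h3 : H.coe.edgeFinset.card ≤ (eS c i).card := by
    apply Finset.card_le_card_of_injOn (Sym2.map (Subtype.val))
    · intro e he
      rw [Finset.mem_coe, SimpleGraph.mem_edgeFinset] at he
      rw [Finset.mem_coe]
      revert he
      refine Sym2.ind (fun a b => ?_) e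
      intro hab
      rw [SimpleGraph.mem_edgeSet, Subgraph.coe_adj] at hab
      have hadj : (⊤ : SimpleGraph (Fin n)).Adj ↑a ↑b ∧ c s(↑a, ↑b) = i := hab
      rw [Sym2.map_pair_eq]
      refine Finset.mem_filter.mpr ⟨?_, hadj.2⟩
      rw [SimpleGraph.mem_edgeFinset, SimpleGraph.mem_edgeSet]
      exact hadj.1
    · exact (Sym2.map.injective Subtype.val_injective).injOn
  omega

/-- Leaf bound: each color class on ≥ 3 vertices has a vertex of degree ≥ 2. -/
lemma r_lt_t (c : Sym2 (Fin n) → Fin k)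
    (hconn : IsConnectedEdgeColoring (⊤ : SimpleGraph (Fin n)) c) (i : Fin k)
    (h3 : 3 ≤ (vS c i).card) :
    (rS c i).card + 1 ≤ (vS c i).card := by
  classical
  set H := (colorClassSubgraph (⊤ : SimpleGraph (Fin n)) c i) with hH
  letI : Fintype ↥H.verts := Fintype.ofFinite _
  have hcoe : H.coe.Connected := ((Subgraph.connected_iff').mp (hconn i))
  have h2 : Fintype.card ↥H.verts = (vS c i).card := card_verts_eq c i
  obtain ⟨v, a, b, hab, hva, hvb⟩ := conn_exists_two_nbrs H.coe hcoe (by omega)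
  rw [Subgraph.coe_adj] at hva hvb
  have hadja : (⊤ : SimpleGraph (Fin n)).Adj ↑v ↑a ∧ c s(↑v, ↑a) = i := hva
  have hadjb : (⊤ : SimpleGraph (Fin n)).Adj ↑v ↑b ∧ c s(↑v, ↑b) = i := hvb
  have hma : (a : Fin n) ∈ mS c ↑v i := mem_mS.mpr ⟨(hadja.1.ne).symm, hadja.2⟩
  have hmb : (b : Fin n) ∈ mS c ↑v i := mem_mS.mpr ⟨(hadjb.1.ne).symm, hadjb.2⟩
  have hne : (a : Fin n) ≠ (b : Fin n) := fun h => hab (Subtype.ext h)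
  have hcard2 : 2 ≤ (mS c ↑v i).card := by
    have hsub : ({(a : Fin n), (b : Fin n)} : Finset (Fin n)) ⊆ mS c ↑v i := by
      intro x hx
      rcases Finset.mem_insert.mp hx with rfl | hx
      · exact hma
      · rw [Finset.mem_singleton.mp hx]
        exact hmb
    have := Finset.card_le_card hsub
    rwa [Finset.card_pair hne] at this
  have hvmem : (v : Fin n) ∈ vS c i :=
    Finset.mem_filter.mpr ⟨Finset.mem_univ _, by omega⟩
  have hsub : rS c i ⊆ (vS c i).erase ↑v := by
    intro x hx
    have hx1 : (mS c x i).card = 1 := (Finset.mem_filter.mp hx).2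
    refine Finset.mem_erase.mpr ⟨?_, Finset.mem_filter.mpr ⟨Finset.mem_univ _, by omega⟩⟩
    intro hxv
    rw [hxv] at hx1
    omega
  have := Finset.card_le_card hsub
  rw [Finset.card_erase_of_mem hvmem] at this
  omega

/-- If some color class has at most 2 vertices then `k ≤ 2 * (n-1)`. -/
lemma small_class (c : Sym2 (Fin n) → Fin k)
    (hcomplete : IsCompleteEdgeColoring (⊤ : SimpleGraph (Fin n)) c) (i : Fin k)
    (hsmall : (vS c i).card ≤ 2) : k ≤ 2 * (n - 1) := by
  classical
  obtain ⟨e, he, hce⟩ := hcomplete.1 i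
  revert he hce
  refine Sym2.ind (fun a b => ?_) e
  intro hab hcab
  rw [SimpleGraph.mem_edgeSet, SimpleGraph.top_adj] at hab
  have hmem1 : a ∈ vS c i := by
    refine Finset.mem_filter.mpr ⟨Finset.mem_univ _, mS_pos_iff.mpr ⟨b, hab, hcab⟩⟩
  have hmem2 : b ∈ vS c i := by
    refine Finset.mem_filter.mpr ⟨Finset.mem_univ _, mS_pos_iff.mpr ⟨a, Ne.symm hab, ?_⟩⟩
    rw [Sym2.eq_swap]
    exact hcab
  have hsubset : ({a, b} : Finset (Fin n)) ⊆ vS c i := by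
    intro x hx
    rcases Finset.mem_insert.mp hx with rfl | hx
    · exact hmem1
    · rw [Finset.mem_singleton.mp hx]
      exact hmem2
  have hcardab : ({a, b} : Finset (Fin n)).card = 2 := Finset.card_pair hab
  have heq : ({a, b} : Finset (Fin n)) = vS c i :=
    Finset.eq_of_subset_of_card_le hsubset (by omega)
  have hcover : (Finset.univ : Finset (Fin k)) ⊆ dS c a ∪ dS c b := by
    intro j _
    by_cases hji : j = i
    · subst hji
      exact Finset.mem_union_left _
        (Finset.mem_filter.mpr ⟨Finset.mem_univ _, mS_pos_iff.mpr ⟨b, hab, hcab⟩⟩)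
    · obtain ⟨u, x, w, hux, huw, hcx, hcw⟩ := hcomplete.2 j i hji
      rw [SimpleGraph.top_adj] at hux huw
      have humem : u ∈ vS c i :=
        Finset.mem_filter.mpr ⟨Finset.mem_univ _, mS_pos_iff.mpr ⟨w, huw, hcw⟩⟩
      have hj_at_u : j ∈ dS c u :=
        Finset.mem_filter.mpr ⟨Finset.mem_univ _, mS_pos_iff.mpr ⟨x, hux, hcx⟩⟩
      rw [← heq] at humem
      rcases Finset.mem_insert.mp humem with rfl | hu
      · exact Finset.mem_union_left _ hj_at_u
      · rw [Finset.mem_singleton.mp hu] at hj_at_u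
        exact Finset.mem_union_right _ hj_at_u
  have h1 := Finset.card_le_card hcover
  have h2 := Finset.card_union_le (dS c a) (dS c b)
  have h3 := dS_card_le c a
  have h4 := dS_card_le c b
  rw [Finset.card_univ, Fintype.card_fin] at h1
  omega

lemma cover (c : Sym2 (Fin n) → Fin k) (hn : 0 < n)
    (hcomplete : IsCompleteEdgeColoring (⊤ : SimpleGraph (Fin n)) c) :
    k * k ≤ k + ∑ v, (oS c v).card := by
  classical
  have hwit : ∀ p : Fin k × Fin k, p.1 ≠ p.2 →
      ∃ u, 0 < (mS c u p.1).card ∧ 0 < (mS c u p.2).card := by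
    intro p hp
    obtain ⟨u, x, w, hux, huw, hcx, hcw⟩ := hcomplete.2 p.1 p.2 hp
    rw [SimpleGraph.top_adj] at hux huw
    exact ⟨u, mS_pos_iff.mpr ⟨x, hux, hcx⟩, mS_pos_iff.mpr ⟨w, huw, hcw⟩⟩
  choose wf hw1 hw2 using hwit
  set F : Fin k × Fin k → Fin n :=
    fun p => if h : p.1 ≠ p.2 then wf p h else ⟨0, hn⟩ with hF
  set OD : Finset (Fin k × Fin k) := Finset.univ.filter (fun p => p.1 ≠ p.2) with hOD
  have hODcard : OD.card + k = k * k := by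
    have h := offdiag_card (Finset.univ : Finset (Fin k))
    rw [Finset.univ_product_univ] at h
    rw [Finset.card_univ, Fintype.card_fin] at h
    exact h
  have hfib := Finset.card_eq_sum_card_fiberwise
    (s := OD) (t := Finset.univ) (f := F) (fun p _ => Finset.mem_univ _)
  have hperv : ∀ v, (OD.filter (fun p => F p = v)).card ≤ (oS c v).card := by
    intro v
    apply Finset.card_le_card
    intro p hp
    obtain ⟨hp1, hp2⟩ := Finset.mem_filter.mp hp
    have hpne : p.1 ≠ p.2 := (Finset.mem_filter.mp hp1).2
    have hFp : F p = wf p hpne := dif_pos hpne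
    rw [hFp] at hp2
    refine Finset.mem_filter.mpr ⟨Finset.mem_product.mpr ⟨?_, ?_⟩, hpne⟩
    · refine Finset.mem_filter.mpr ⟨Finset.mem_univ _, ?_⟩
      rw [← hp2]
      exact hw1 p hpne
    · refine Finset.mem_filter.mpr ⟨Finset.mem_univ _, ?_⟩
      rw [← hp2]
      exact hw2 p hpne
  have : OD.card ≤ ∑ v, (oS c v).card := by
    rw [hfib]
    exact Finset.sum_le_sum (fun v _ => hperv v)
  omega

lemma key_count (hn : 8 ≤ n) (c : Sym2 (Fin n) → Fin k)
    (hcomplete : IsCompleteEdgeColoring (⊤ : SimpleGraph (Fin n)) c)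
    (hconn : IsConnectedEdgeColoring (⊤ : SimpleGraph (Fin n)) c) :
    2 * k ^ 2 ≤ n * (n - 1) * (n - 1) + (n - 1) * k := by
  classical
  obtain ⟨m, rfl⟩ : ∃ m, n = m + 8 := ⟨n - 8, by omega⟩
  have hrw : m + 8 - 1 = m + 7 := by omega
  rw [hrw]
  by_cases hk : k ≤ 2 * (m + 7)
  · nlinarith [Nat.mul_le_mul hk hk]
  · push_neg at hk
    have h3all : ∀ i, 3 ≤ (vS c i).card := by
      intro i
      by_contra h
      push_neg at h
      have := small_class c hcomplete i (by omega)
      rw [hrw] at this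
      omega
    set S := ∑ v, (dS c v).card with hS
    set O := ∑ v, (oS c v).card with hO
    set Y := ∑ v, (yS c v).card with hY
    set T := ∑ i, (vS c i).card with hT
    set R := ∑ i, (rS c i).card with hR
    set E := ∑ i, (eS c i).card with hE
    have hcov : k * k ≤ k + O := cover c (by omega) hcomplete
    have hST : S = T := sum_d_eq_sum_t c
    have hYR : Y = R := sum_y_eq_sum_r c
    have h2E : 2 * E = (m + 8) * (m + 7) := by
      have := sum_e_card c
      rwa [hrw] at this
    have hTE : T ≤ E + k := by
      calc T ≤ ∑ i, ((eS c i).card + 1) :=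
            Finset.sum_le_sum (fun i _ => t_le_e c hconn i)
        _ = E + k := by
            rw [Finset.sum_add_distrib, Finset.sum_const, Finset.card_univ,
              Fintype.card_fin, smul_eq_mul, mul_one]
    have hRT : R + k ≤ T := by
      have h := Finset.sum_le_sum (fun (i : Fin k) (_ : i ∈ Finset.univ) =>
        r_lt_t c hconn i (h3all i))
      rw [Finset.sum_add_distrib, Finset.sum_const, Finset.card_univ,
        Fintype.card_fin, smul_eq_mul, mul_one] at h
      exact h
    have hperv : ∀ v : Fin (m + 8), 2 * (oS c v).card + 2 * (dS c v).card
        ≤ (m + 7) * (dS c v).card + (m + 7) * (yS c v).card := by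
      intro v
      have h1 := oS_card c v
      have h2 := two_dS_card_le c v
      have h3 := dS_card_le c v
      rw [hrw] at h2 h3
      nlinarith [Nat.mul_le_mul_left ((dS c v).card) h2,
        Nat.mul_le_mul_right ((yS c v).card) h3]
    have hsum2 : 2 * O + 2 * S ≤ (m + 7) * S + (m + 7) * Y := by
      have h := Finset.sum_le_sum (fun (v : Fin (m + 8)) (_ : v ∈ Finset.univ) => hperv v)
      rw [Finset.sum_add_distrib, Finset.sum_add_distrib, ← Finset.mul_sum,
        ← Finset.mul_sum, ← Finset.mul_sum, ← Finset.mul_sum] at h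
      exact h
    -- assemble
    have hYS : Y + k ≤ S := by omega
    have hSE : S ≤ E + k := by omega
    have hmul1 : (m + 7) * Y + (m + 7) * k ≤ (m + 7) * S := by
      have h := Nat.mul_le_mul_left (m + 7) hYS
      rw [Nat.mul_add] at h
      exact h
    have hc2 : 2 * O + (m + 7) * k ≤ (2 * m + 12) * S := by
      have hpp : (m + 7) * S + (m + 7) * S = 2 * S + (2 * m + 12) * S := by ring
      linarith
    have hc3 : (2 * m + 12) * S ≤ (2 * m + 12) * E + (2 * m + 12) * k := by
      have h := Nat.mul_le_mul_left (2 * m + 12) hSE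
      rw [Nat.mul_add] at h
      exact h
    have hc4 : (2 * m + 12) * E = (m + 6) * ((m + 8) * (m + 7)) := by
      have h : (2 * m + 12) * E = (m + 6) * (2 * E) := by ring
      rw [h, h2E]
    have hfin : (m + 6) * ((m + 8) * (m + 7)) ≤ (m + 8) * (m + 7) * (m + 7) := by
      calc (m + 6) * ((m + 8) * (m + 7)) ≤ (m + 7) * ((m + 8) * (m + 7)) :=
            Nat.mul_le_mul_right _ (by omega)
        _ = (m + 8) * (m + 7) * (m + 7) := by ring
    have hkk : (2 * m + 12) * k + 2 * k = (m + 7) * k + (m + 7) * k := by ring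
    have hsq : k ^ 2 = k * k := sq k
    linarith

end CPAux

theorem connected_pseudoachromatic_index_upper_bound
    (n k : ℕ) (hn : 8 ≤ n)
    (c : Sym2 (Fin n) → Fin k)
    (hcomplete : IsCompleteEdgeColoring (⊤ : SimpleGraph (Fin n)) c)
    (hconn : IsConnectedEdgeColoring (⊤ : SimpleGraph (Fin n)) c) :
    (k : ℝ) ≤ ((n : ℝ) - 1) * (Real.sqrt ((n : ℝ) / 2 + 1 / 16) + 1 / 4) := by
  have hkey := CPAux.key_count hn c hcomplete hconn
  -- cast the key inequality to ℝ
  have hcast : 2 * (k : ℝ) ^ 2 ≤ (n : ℝ) * ((n : ℝ) - 1) * ((n : ℝ) - 1) + ((n : ℝ) - 1) * k := by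
    have h1 : ((2 * k ^ 2 : ℕ) : ℝ) ≤ ((n * (n - 1) * (n - 1) + (n - 1) * k : ℕ) : ℝ) :=
      Nat.cast_le.mpr hkey
    have h2 : ((n - 1 : ℕ) : ℝ) = (n : ℝ) - 1 := by
      rw [Nat.cast_sub (by omega : 1 ≤ n)]
      norm_num
    push_cast [h2] at h1
    linarith
  set s : ℝ := Real.sqrt ((n : ℝ) / 2 + 1 / 16) with hs
  have harg : (0 : ℝ) ≤ (n : ℝ) / 2 + 1 / 16 := by positivity
  have hs2 : s ^ 2 = (n : ℝ) / 2 + 1 / 16 := Real.sq_sqrt harg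
  have hs0 : (0 : ℝ) ≤ s := Real.sqrt_nonneg _
  have hn8 : (8 : ℝ) ≤ (n : ℝ) := by exact_mod_cast hn
  have hs2' : (2 : ℝ) ≤ s := by nlinarith
  have hk0 : (0 : ℝ) ≤ (k : ℝ) := Nat.cast_nonneg k
  set a : ℝ := (n : ℝ) - 1 with ha
  have ha7 : (7 : ℝ) ≤ a := by simp [ha]; linarith
  clear_value s a
  rw [ha] at hcast ⊢
  rw [← ha] at hcast ⊢
  by_contra hcon
  push_neg at hcon
  have hP : (0 : ℝ) < (k : ℝ) - a * s - a / 4 := by nlinarith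
  have hQ : (0 : ℝ) < 2 * (k : ℝ) + 2 * a * s - a / 2 := by nlinarith
  have hPQ := mul_pos hP hQ
  have hss : a ^ 2 * s ^ 2 = a ^ 2 * ((n : ℝ) / 2) + a ^ 2 / 16 := by
    linear_combination a ^ 2 * hs2
  nlinarith [hPQ, hcast, hss]
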